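/- Let k ∈ ℕ, q ≥ 1, let H be a k-labeled graph, and let i, b, a_1, …, a_q ∈ Fin k with b ∉ {a_1, …, a_q, i}. Assume no operator occurrence on the left-hand side is useless. Then θ_i(ρ_{a_1→i}(⋯ ρ_{a_q→i}(ρ_{i→b}(H)) ⋯)) = ρ_{a_1→i}(θ_{a_1}(ρ_{a_2→a_1}(⋯ ρ_{a_q→a_1}(ρ_{i→b}(H)) ⋯))) as k-labeled graphs, up to label-preserving isomorphism. -/

import Mathlib

/-! ### `k`-labeled graphs and the basic operations on them -/

/-- A `k`-labeled graph: a simple graph together with a labeling of its vertices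
by labels from `Fin k`. -/
structure LGraph (k : ℕ) where
  V : Type
  G : SimpleGraph V
  lab : V → Fin k

namespace LGraph

variable {k : ℕ}

/-- The join operation `η_{a,b}`: add all edges between vertices of label `a`
and vertices of label `b`. -/
def join (a b : Fin k) (H : LGraph k) : LGraph k where
  V := H.V
  G :=
    { Adj := fun u v =>
        H.G.Adj u v ∨ (u ≠ v ∧ ((H.lab u = a ∧ H.lab v = b) ∨ (H.lab u = b ∧ H.lab v = a)))
      symm := by
        constructor
        intro u v h
        rcases h with h | ⟨hne, h⟩
        · exact Or.inl (H.G.adj_symm h)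
        · refine Or.inr ⟨hne.symm, ?_⟩
          rcases h with ⟨h1, h2⟩ | ⟨h1, h2⟩
          · exact Or.inr ⟨h2, h1⟩
          · exact Or.inl ⟨h2, h1⟩
      loopless := by
        constructor
        intro v h
        rcases h with h | ⟨hne, _⟩
        · exact H.G.irrefl h
        · exact hne rfl }
  lab := H.lab

/-- The relabel operation `ρ_{a→b}`: every vertex of label `a` gets label `b` instead. -/
def relabel (a b : Fin k) (H : LGraph k) : LGraph k where
  V := H.V
  G := H.G
  lab := fun v => if H.lab v = a then b else H.lab v

/-- The fuse operation `θ_i`: replace all vertices of label `i` by a single new vertex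
(represented by `none`) of label `i` whose neighbourhood is the union of their
neighbourhoods. -/
def fuse (i : Fin k) (H : LGraph k) : LGraph k where
  V := Option {v : H.V // H.lab v ≠ i}
  G :=
    { Adj := fun x y =>
        match x, y with
        | some u, some v => H.G.Adj u.1 v.1
        | some u, none => ∃ w, H.lab w = i ∧ H.G.Adj u.1 w
        | none, some v => ∃ w, H.lab w = i ∧ H.G.Adj w v.1
        | none, none => False
      symm := by
        constructor
        rintro (_ | u) (_ | v) h
        · exact h
        · obtain ⟨w, hw, ha⟩ := h
          exact ⟨w, hw, ha.symm⟩
        · obtain ⟨w, hw, ha⟩ := h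
          exact ⟨w, hw, ha.symm⟩
        · exact H.G.adj_symm h
      loopless := by
        constructor
        rintro (_ | v) h
        · exact h
        · exact H.G.irrefl h }
  lab := fun x =>
    match x with
    | some u => H.lab u.1
    | none => i

/-- Disjoint union `H1 ⊕ H2` of two `k`-labeled graphs. -/
def union (H1 H2 : LGraph k) : LGraph k where
  V := H1.V ⊕ H2.V
  G := H1.G ⊕g H2.G
  lab := Sum.elim H1.lab H2.lab

/-- Label-preserving isomorphism of `k`-labeled graphs. -/
def LIso (H1 H2 : LGraph k) : Prop :=
  ∃ e : H1.G ≃g H2.G, ∀ v, H2.lab (e v) = H1.lab v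

/-- The occurrence of the join operator `η_{a,b}` applied to `H` is not useless,
i.e. it creates at least one new edge. -/
def joinUseful (a b : Fin k) (H : LGraph k) : Prop :=
  ∃ u v : H.V, u ≠ v ∧ H.lab u = a ∧ H.lab v = b ∧ ¬ H.G.Adj u v

/-- The occurrence of the fuse operator `θ_i` applied to `H` is not useless,
i.e. `H` has at least two vertices of label `i`. -/
def fuseUseful (i : Fin k) (H : LGraph k) : Prop :=
  ∃ u v : H.V, u ≠ v ∧ H.lab u = i ∧ H.lab v = i

/-- The occurrence of a relabel operator `ρ_{a→b}` applied to `H` is not useless,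
i.e. `H` has a vertex of label `a`. -/
def relabelUseful (a : Fin k) (H : LGraph k) : Prop :=
  ∃ v : H.V, H.lab v = a

/-- `relabelSeq i [a₁, …, a_q] H = ρ_{a₁→i}(⋯(ρ_{a_q→i}(H))⋯)`. -/
def relabelSeq (i : Fin k) : List (Fin k) → LGraph k → LGraph k
  | [], H => H
  | a :: as, H => relabel a i (relabelSeq i as H)

/-- None of the relabel operators in `relabelSeq i as H` is useless (this includes
that none of them has the form `ρ_{a→a}`). -/
def relabelSeqUseful (i : Fin k) : List (Fin k) → LGraph k → Prop
  | [], _ => True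
  | a :: as, H => relabelSeqUseful i as H ∧ a ≠ i ∧ relabelUseful a (relabelSeq i as H)

end LGraph

open LGraph


lemma relabelSeq_eq {k : ℕ} (i : Fin k) (as : List (Fin k)) (K : LGraph k) :
    relabelSeq i as K = ⟨K.V, K.G, fun v => if K.lab v ∈ as then i else K.lab v⟩ := by
  induction as with
  | nil => simp [relabelSeq]
  | cons a as ih =>
    rw [relabelSeq, ih]
    simp only [relabel]
    congr 1
    funext v
    by_cases h : K.lab v ∈ as
    · simp only [if_pos h, List.mem_cons, Or.inr h, if_pos, ite_self]
    · by_cases h2 : K.lab v = a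
      · rw [if_neg h, if_pos h2, if_pos (List.mem_cons.mpr (Or.inl h2))]
      · rw [if_neg h, if_neg h2, if_neg (by simp [List.mem_cons, h, h2])]

lemma fuse_relabel_liso {k : ℕ} (V : Type) (G : SimpleGraph V) (f g : V → Fin k)
    (i j : Fin k) (hlab : ∀ v, f v = i ↔ g v = j) (hfg : ∀ v, f v ≠ i → f v = g v) :
    LIso (fuse i ⟨V, G, f⟩) (relabel j i (fuse j ⟨V, G, g⟩)) := by
  have h : ∀ v : V, f v ≠ i ↔ g v ≠ j := fun v => not_congr (hlab v)
  refine ⟨⟨Equiv.optionCongr (Equiv.subtypeEquivRight h), ?_⟩, ?_⟩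
  · rintro (_ | ⟨u, hu⟩) (_ | ⟨v, hv⟩) <;>
      simp only [fuse, relabel, Equiv.optionCongr, Equiv.subtypeEquivRight,
        Equiv.coe_fn_mk, Option.map_none, Option.map_some] <;>
      constructor <;> rintro h' <;>
      first
      | exact h'
      | (obtain ⟨w, hw, ha⟩ := h'; exact ⟨w, by rw [← hlab w] at *; exact ⟨hw, ha⟩⟩)
      | (obtain ⟨w, hw, ha⟩ := h'; exact ⟨w, by rw [hlab w] at *; exact ⟨hw, ha⟩⟩)
  · rintro (_ | ⟨u, hu⟩)
    · show (if j = j then i else j) = i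
      simp [fuse, relabel, Equiv.optionCongr, Equiv.subtypeEquivRight, RelIso.coe_fn_mk, Equiv.coe_fn_mk]
    · have h1 := hfg u hu
      have h2 : g u ≠ j := (h u).mp hu
      show (if g u = j then i else g u) = f u
      simp [fuse, relabel, Equiv.optionCongr, Equiv.subtypeEquivRight, RelIso.coe_fn_mk, Equiv.coe_fn_mk, h2, h1]

/-- rule 8: if `q ≥ 1` and `b ∉ {a₁, …, a_q, i}`, then
`θ_i(ρ_{a₁→i}(⋯ρ_{a_q→i}(ρ_{i→b}(H))⋯)) = ρ_{a₁→i}(θ_{a₁}(ρ_{a₂→a₁}(⋯ρ_{a_q→a₁}(ρ_{i→b}(H))⋯)))`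
provided that no operator occurrence on the left-hand side is useless.
Here the nonempty list of labels is `a₁ :: rest = [a₁, …, a_q]`. -/
theorem fuse_relabelSeq_relabel_from_i {k : ℕ} (H : LGraph k) (i b a1 : Fin k)
    (rest : List (Fin k))
    (hb : b ∉ (a1 :: rest) ∧ b ≠ i) (hib : i ≠ b)
    (hinner : relabelUseful i H)
    (hseq : relabelSeqUseful i (a1 :: rest) (relabel i b H))
    (hfuse : fuseUseful i (relabelSeq i (a1 :: rest) (relabel i b H))) :
    LIso (fuse i (relabelSeq i (a1 :: rest) (relabel i b H)))
         (relabel a1 i (fuse a1 (relabelSeq a1 rest (relabel i b H)))) := by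
  obtain ⟨hbmem, hbi⟩ := hb
  set K := relabel i b H with hK
  have hKlab : ∀ v : K.V, K.lab v ≠ i := by
    intro v
    show (if H.lab v = i then b else H.lab v) ≠ i
    by_cases h : H.lab v = i <;> simp [h, hbi]
  rw [relabelSeq_eq, relabelSeq_eq]
  apply fuse_relabel_liso
  · intro v
    by_cases h : K.lab v ∈ rest
    · simp [h, List.mem_cons, Or.inr h]
    · by_cases h2 : K.lab v = a1 <;> simp [h, h2, hKlab v]
  · intro v hv
    by_cases h : K.lab v ∈ rest
    · exact absurd (by simp [List.mem_cons, Or.inr h]) hv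
    · by_cases h2 : K.lab v = a1
      · exact absurd (by simp [h2]) hv
      · simp [h, h2]
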